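/- arXiv:2302.08218 — 3 statements merged into one kernel-verified Lean document; each statement's English description precedes it below -/
import Mathlib

section
/- Let h : ℝ → ℝ be continuously differentiable with exp(-h(x)/θ) integrable over (0,∞), x·exp(-h(x)/θ) → 0 as x → 0⁺ and as x → ∞, and x h'(x) exp(-h(x)/θ) integrable. Then ∫₀^∞ x h'(x) e^{-h(x)/θ} dx = θ ∫₀^∞ e^{-h(x)/θ} dx; equivalently, for the probability density σ_θ(x) ∝ e^{-h(x)/θ} on (0,∞), the expectation of x h'(x) equals θ. -/
open Real Filter Set MeasureTheory

theorem theta_expression_population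
    (θ : ℝ) (hθ : 0 < θ) (h : ℝ → ℝ) (hC1 : ContDiff ℝ 1 h)
    (hInt : IntegrableOn (fun x => exp (-h x / θ)) (Ioi 0))
    (hlim0 : Tendsto (fun x => x * exp (-h x / θ)) (nhdsWithin 0 (Ioi 0)) (nhds 0))
    (hlimTop : Tendsto (fun x => x * exp (-h x / θ)) atTop (nhds 0))
    (hInt' : IntegrableOn (fun x => x * deriv h x * exp (-h x / θ)) (Ioi 0)) :
    ∫ x in Ioi (0:ℝ), x * deriv h x * exp (-h x / θ)
      = θ * ∫ x in Ioi (0:ℝ), exp (-h x / θ) := by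
  set f : ℝ → ℝ := fun x => x * exp (-h x / θ) with hf
  set f' : ℝ → ℝ := fun x => exp (-h x / θ) - x * deriv h x * exp (-h x / θ) / θ with hf'
  have hdh : Differentiable ℝ h := hC1.differentiable one_ne_zero
  have hd : ∀ x ∈ Ioi (0:ℝ), HasDerivAt f (f' x) x := by
    intro x _
    have h1 : HasDerivAt (fun x => -h x / θ) (-deriv h x / θ) x :=
      ((hdh x).hasDerivAt.neg).div_const θ
    have h2 : HasDerivAt (fun x => exp (-h x / θ)) (exp (-h x / θ) * (-deriv h x / θ)) x :=
      h1.exp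
    have h3 : HasDerivAt f (1 * exp (-h x / θ) + x * (exp (-h x / θ) * (-deriv h x / θ))) x :=
      (hasDerivAt_id' x).mul h2
    convert h3 using 1
    simp [hf']
    ring
  have hcont : ContinuousWithinAt f (Ici 0) 0 := by
    apply Continuous.continuousWithinAt
    exact continuous_id.mul ((hdh.continuous.neg.div_const θ).rexp)
  have hint : IntegrableOn f' (Ioi 0) := hInt.sub (hInt'.div_const θ)
  have key := MeasureTheory.integral_Ioi_of_hasDerivAt_of_tendsto hcont hd hint hlimTop
  have hf0 : f 0 = 0 := by simp [hf]
  rw [hf0, sub_zero] at key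
  have hsplit : ∫ x in Ioi (0:ℝ), f' x
      = (∫ x in Ioi (0:ℝ), exp (-h x / θ))
        - (∫ x in Ioi (0:ℝ), x * deriv h x * exp (-h x / θ)) / θ := by
    rw [MeasureTheory.integral_sub hInt (hInt'.div_const θ), integral_div]
  rw [hsplit] at key
  have := sub_eq_zero.mp key
  field_simp at this ⊢
  linarith
end

section
/- With the logistic h-function h(x) = x/K − ln x on (0,∞), the density σ⁺(x,y) = C e^{-h(x)/θ} e^{-y²/(2θ)} satisfies −∂_x(λ x y σ⁺) − ∂_y((−λ(K⁻¹(x − K) − θ) − γ y)σ⁺) + γθ ∂²_y σ⁺ = 0 for all x > 0, y ∈ ℝ. -/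
open Real

theorem fokker_planck_stationary_logistic
    (K lam gam θ C : ℝ) (hK : 0 < K) (hlam : 0 < lam) (hgam : 0 < gam) (hθ : 0 < θ)
    (h : ℝ → ℝ) (hh : h = fun x => x / K - Real.log x)
    (σ : ℝ → ℝ → ℝ)
    (hσ : σ = fun x y => C * exp (-h x / θ) * exp (-y ^ 2 / (2 * θ))) :
    ∀ x : ℝ, 0 < x → ∀ y : ℝ,
      - deriv (fun x' => lam * x' * y * σ x' y) x
      - deriv (fun y' => (-lam * (K⁻¹ * (x - K) - θ) - gam * y') * σ x y') y
      + gam * θ * iteratedDeriv 2 (fun y' => σ x y') y = 0 := by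
  subst hσ hh
  intro x hx y
  have hθ0 : θ ≠ 0 := hθ.ne'
  have hK0 : K ≠ 0 := hK.ne'
  have hx0 : x ≠ 0 := hx.ne'
  -- derivative of the Gaussian factor in y
  have Egen : ∀ z : ℝ, HasDerivAt (fun y' : ℝ => Real.exp (-y' ^ 2 / (2 * θ)))
      (Real.exp (-z ^ 2 / (2 * θ)) * (-z / θ)) z := by
    intro z
    have h2 : HasDerivAt (fun y' : ℝ => y' ^ 2) (2 * z) z := by
      simpa using hasDerivAt_pow 2 z
    have h1 : HasDerivAt (fun y' : ℝ => -y' ^ 2 / (2 * θ)) (-z / θ) z := by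
      have := h2.neg.div_const (2 * θ)
      refine this.congr_deriv ?_
      ring
    simpa using h1.exp
  -- derivative of the x-exponent
  have hg : HasDerivAt (fun x' : ℝ => -(x' / K - Real.log x') / θ)
      ((1 / x - 1 / K) / θ) x := by
    have h1 : HasDerivAt (fun x' : ℝ => x' / K - Real.log x') (1 / K - 1 / x) x := by
      have := ((hasDerivAt_id x).div_const K).sub (Real.hasDerivAt_log hx0)
      exact this.congr_deriv (by simp [one_div])
    have := h1.neg.div_const θ
    refine this.congr_deriv ?_
    ring
  -- the x-derivative
  have Dx : HasDerivAt (fun x' : ℝ => lam * x' * y *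
      (C * Real.exp (-(x' / K - Real.log x') / θ) * Real.exp (-y ^ 2 / (2 * θ))))
      ((lam * y) * (C * Real.exp (-(x / K - Real.log x) / θ) * Real.exp (-y ^ 2 / (2 * θ)))
        + (lam * x * y) * ((C * (Real.exp (-(x / K - Real.log x) / θ) * ((1 / x - 1 / K) / θ)))
            * Real.exp (-y ^ 2 / (2 * θ)))) x := by
    have h1 : HasDerivAt (fun x' : ℝ => lam * x' * y) (lam * y) x := by
      have := (hasDerivAt_id x).const_mul lam
      have := this.mul_const y
      simpa using this
    have h2 : HasDerivAt (fun x' : ℝ => C * Real.exp (-(x' / K - Real.log x') / θ)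
        * Real.exp (-y ^ 2 / (2 * θ)))
        ((C * (Real.exp (-(x / K - Real.log x) / θ) * ((1 / x - 1 / K) / θ)))
          * Real.exp (-y ^ 2 / (2 * θ))) x :=
      ((hg.exp.const_mul C).mul_const _)
    exact h1.mul h2
  -- the y-derivative
  have Dy : HasDerivAt (fun y' : ℝ => (-lam * (K⁻¹ * (x - K) - θ) - gam * y') *
      (C * Real.exp (-(x / K - Real.log x) / θ) * Real.exp (-y' ^ 2 / (2 * θ))))
      ((-gam) * (C * Real.exp (-(x / K - Real.log x) / θ) * Real.exp (-y ^ 2 / (2 * θ)))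
        + (-lam * (K⁻¹ * (x - K) - θ) - gam * y) *
          ((C * Real.exp (-(x / K - Real.log x) / θ)) *
            (Real.exp (-y ^ 2 / (2 * θ)) * (-y / θ)))) y := by
    have h1 : HasDerivAt (fun y' : ℝ => -lam * (K⁻¹ * (x - K) - θ) - gam * y') (-gam) y := by
      have := (hasDerivAt_const y (-lam * (K⁻¹ * (x - K) - θ))).sub
        ((hasDerivAt_id y).const_mul gam)
      exact this.congr_deriv (by simp)
    have h2 : HasDerivAt (fun y' : ℝ => C * Real.exp (-(x / K - Real.log x) / θ) *
        Real.exp (-y' ^ 2 / (2 * θ)))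
        ((C * Real.exp (-(x / K - Real.log x) / θ)) *
          (Real.exp (-y ^ 2 / (2 * θ)) * (-y / θ))) y :=
      (Egen y).const_mul _
    have := h1.mul h2
    exact this
  -- first derivative of the Gaussian as a function
  have Dfirst : (deriv fun y' : ℝ => C * Real.exp (-(x / K - Real.log x) / θ) *
      Real.exp (-y' ^ 2 / (2 * θ)))
      = fun z : ℝ => (C * Real.exp (-(x / K - Real.log x) / θ)) *
          (Real.exp (-z ^ 2 / (2 * θ)) * (-z / θ)) := by
    funext z
    exact ((Egen z).const_mul _).deriv
  -- second derivative
  have D2 : HasDerivAt (fun z : ℝ => (C * Real.exp (-(x / K - Real.log x) / θ)) *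
      (Real.exp (-z ^ 2 / (2 * θ)) * (-z / θ)))
      ((C * Real.exp (-(x / K - Real.log x) / θ)) *
        ((Real.exp (-y ^ 2 / (2 * θ)) * (-y / θ)) * (-y / θ)
          + Real.exp (-y ^ 2 / (2 * θ)) * (-1 / θ))) y := by
    have hlin : HasDerivAt (fun z : ℝ => -z / θ) (-1 / θ) y := by
      have := ((hasDerivAt_id y).neg).div_const θ
      simpa using this
    have := ((Egen y).mul hlin).const_mul (C * Real.exp (-(x / K - Real.log x) / θ))
    exact this
  have e2 : iteratedDeriv 2 (fun y' : ℝ => C * Real.exp (-(x / K - Real.log x) / θ) *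
      Real.exp (-y' ^ 2 / (2 * θ))) y
      = (C * Real.exp (-(x / K - Real.log x) / θ)) *
        ((Real.exp (-y ^ 2 / (2 * θ)) * (-y / θ)) * (-y / θ)
          + Real.exp (-y ^ 2 / (2 * θ)) * (-1 / θ)) := by
    rw [iteratedDeriv_succ, iteratedDeriv_one, Dfirst]
    exact D2.deriv
  simp only
  rw [Dx.deriv, Dy.deriv, e2]
  have hKi : K⁻¹ * (x - K) = x / K - 1 := by field_simp
  rw [hKi]
  field_simp
  ring
end

section
/- Let h be C¹ on (0,∞) and h* be C² on ℝ. The density σ⁺(x,y) = C e^{-h(x)/θ} e^{-h*(y)/θ} is a stationary solution of the Fokker–Planck equation for the system dx = λ x h*'(y) dt, dy = (−λ(x h'(x) − θ) − γ h*'(y)) dt + √(2γθ) dW; that is, −∂_x(λ x h*'(y) σ⁺) − ∂_y((−λ(x h'(x) − θ) − γ h*'(y))σ⁺) + γθ ∂²_y σ⁺ = 0 pointwise. -/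
open Real

theorem fokker_planck_stationary_nonGaussian
    (lam gam θ C : ℝ) (hlam : 0 < lam) (hgam : 0 < gam) (hθ : 0 < θ)
    (h : ℝ → ℝ) (hC1 : ContDiffOn ℝ 1 h (Set.Ioi 0))
    (hstar : ℝ → ℝ) (hC2 : ContDiff ℝ 2 hstar)
    (σ : ℝ → ℝ → ℝ)
    (hσ : σ = fun x y => C * exp (-h x / θ) * exp (-hstar y / θ)) :
    ∀ x : ℝ, 0 < x → ∀ y : ℝ,
      - deriv (fun x' => lam * x' * deriv hstar y * σ x' y) x
      - deriv (fun y' => (-lam * (x * deriv h x - θ) - gam * deriv hstar y') * σ x y') y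
      + gam * θ * iteratedDeriv 2 (fun y' => σ x y') y = 0 := by
  subst hσ
  intro x hx y
  have hθ' : θ ≠ 0 := ne_of_gt hθ
  have hds : Differentiable ℝ hstar := hC2.differentiable (by norm_num)
  have hds' : Differentiable ℝ (deriv hstar) := by
    have h1 : ContDiff ℝ 1 (deriv hstar) := by
      have := (contDiff_succ_iff_deriv.mp (by exact_mod_cast hC2 : ContDiff ℝ (1 + 1) hstar)).2.2
      exact this
    exact h1.differentiable one_ne_zero
  have hdh : DifferentiableAt ℝ h x :=
    ((hC1.differentiableOn one_ne_zero) x hx).differentiableAt (isOpen_Ioi.mem_nhds hx)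
  have Hexp : HasDerivAt (fun x' => exp (-h x' / θ)) (exp (-h x / θ) * (-(deriv h x) / θ)) x :=
    ((hdh.hasDerivAt.neg.div_const θ).exp)
  have Hey : ∀ y' : ℝ, HasDerivAt (fun t => exp (-hstar t / θ))
      (exp (-hstar y' / θ) * (-(deriv hstar y') / θ)) y' := fun y' =>
    (((hds y').hasDerivAt.neg.div_const θ).exp)
  -- Term 1
  have H1 : HasDerivAt (fun x' => lam * x' * deriv hstar y * (C * exp (-h x' / θ) * exp (-hstar y / θ)))
      ((lam * 1 * deriv hstar y) * (C * exp (-h x / θ) * exp (-hstar y / θ))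
        + (lam * x * deriv hstar y) * (C * (exp (-h x / θ) * (-(deriv h x) / θ)) * exp (-hstar y / θ))) x := by
    exact (((hasDerivAt_id x).const_mul lam).mul_const (deriv hstar y)).mul
      ((Hexp.const_mul C).mul_const (exp (-hstar y / θ)))
  -- Term 2
  have H2 : HasDerivAt (fun y' => (-lam * (x * deriv h x - θ) - gam * deriv hstar y')
        * (C * exp (-h x / θ) * exp (-hstar y' / θ)))
      ((-(gam * deriv (deriv hstar) y)) * (C * exp (-h x / θ) * exp (-hstar y / θ))
        + (-lam * (x * deriv h x - θ) - gam * deriv hstar y)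
          * (C * exp (-h x / θ) * (exp (-hstar y / θ) * (-(deriv hstar y) / θ)))) y := by
    exact ((((hds' y).hasDerivAt).const_mul gam).const_sub (-lam * (x * deriv h x - θ))).mul
      ((Hey y).const_mul (C * exp (-h x / θ)))
  -- Term 3 : first derivative everywhere
  have Hd1 : deriv (fun y' => C * exp (-h x / θ) * exp (-hstar y' / θ))
      = fun y' => C * exp (-h x / θ) * (exp (-hstar y' / θ) * (-(deriv hstar y') / θ)) := by
    funext y'
    exact ((Hey y').const_mul (C * exp (-h x / θ))).deriv
  have H3 : HasDerivAt (fun y' => C * exp (-h x / θ) * (exp (-hstar y' / θ) * (-(deriv hstar y') / θ)))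
      (C * exp (-h x / θ) * ((exp (-hstar y / θ) * (-(deriv hstar y) / θ)) * (-(deriv hstar y) / θ)
        + exp (-hstar y / θ) * (-(deriv (deriv hstar) y) / θ))) y := by
    exact ((Hey y).mul ((hds' y).hasDerivAt.neg.div_const θ)).const_mul (C * exp (-h x / θ))
  have e1 := H1.deriv
  have e2 := H2.deriv
  have e3 : iteratedDeriv 2 (fun y' => C * exp (-h x / θ) * exp (-hstar y' / θ)) y
      = C * exp (-h x / θ) * ((exp (-hstar y / θ) * (-(deriv hstar y) / θ)) * (-(deriv hstar y) / θ)
        + exp (-hstar y / θ) * (-(deriv (deriv hstar) y) / θ)) := by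
    rw [iteratedDeriv_succ, iteratedDeriv_one, Hd1]
    exact H3.deriv
  rw [e1, e2, e3]
  field_simp
  ring
end
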